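/- arXiv:1406.6439 — 3 statements merged into one kernel-verified Lean document; each statement's English description precedes it below -/
import Mathlib

section
/- Let F be a free group and let a be a generator (a member of the free basis, i.e. the image of a basis element under FreeGroup.of). Then the centralizer of a in F equals the cyclic subgroup generated by a: an element x commutes with a if and only if x = a^k for some integer k. -/
section Aux

variable {α : Type*} [DecidableEq α]

private lemma tail_reduced {x : α × Bool} {L : List (α × Bool)}
    (h : FreeGroup.reduce (x :: L) = x :: L) : FreeGroup.reduce L = L := by
  rcases hL : FreeGroup.reduce L with _ | ⟨hd, tl⟩
  · rw [FreeGroup.reduce.cons, hL] at h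
    simp at h
    subst h
    exact hL
  · rw [FreeGroup.reduce.cons, hL] at h
    dsimp only at h
    by_cases hc : x.1 = hd.1 ∧ x.2 = !hd.2
    · rw [if_pos hc] at h
      exfalso
      have hle : (FreeGroup.reduce L).length ≤ L.length :=
        FreeGroup.Red.length_le (FreeGroup.reduce.red)
      rw [hL, h] at hle
      simp at hle
    · rw [if_neg hc] at h
      simp only [List.cons.injEq] at h
      exact h.2

private lemma cons_reduced {c : α × Bool} {L : List (α × Bool)}
    (h : FreeGroup.reduce L = L) (hhd : ∀ tl, L ≠ (c.1, !c.2) :: tl) :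
    FreeGroup.reduce (c :: L) = c :: L := by
  rw [FreeGroup.reduce.cons, h]
  rcases L with _ | ⟨hd, tl⟩
  · rfl
  · simp only []
    rw [if_neg]
    rintro ⟨h1, h2⟩
    exact hhd tl (by rw [show hd = (c.1, !c.2) by
      apply Prod.ext
      · exact h1.symm
      · simpa using congrArg (!·) h2.symm])

private lemma invRev_append_singleton (c : α × Bool) (L : List (α × Bool)) :
    FreeGroup.invRev (L ++ [c]) = (c.1, !c.2) :: FreeGroup.invRev L := by
  simp [FreeGroup.invRev]

private lemma append_reduced {c : α × Bool} {L : List (α × Bool)}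
    (h : FreeGroup.reduce L = L) (hlast : ∀ t, L ≠ t ++ [(c.1, !c.2)]) :
    FreeGroup.reduce (L ++ [c]) = L ++ [c] := by
  have hinv : FreeGroup.reduce (FreeGroup.invRev L) = FreeGroup.invRev L := by
    rw [FreeGroup.reduce_invRev, h]
  have hhd : ∀ tl, FreeGroup.invRev L ≠ ((c.1, !c.2).1, !(c.1, !c.2).2) :: tl := by
    intro tl htl
    simp only [Bool.not_not] at htl
    apply hlast (FreeGroup.invRev tl)
    have := congrArg FreeGroup.invRev htl
    rw [FreeGroup.invRev_invRev] at this
    rw [this]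
    have : FreeGroup.invRev (((c.1, c.2) : α × Bool) :: tl) =
        FreeGroup.invRev tl ++ [(c.1, !c.2)] := by
      simp [FreeGroup.invRev]
    rw [this]
  have key := cons_reduced (c := (c.1, !c.2)) hinv hhd
  have : FreeGroup.invRev (L ++ [c]) = (c.1, !c.2) :: FreeGroup.invRev L :=
    invRev_append_singleton c L
  calc FreeGroup.reduce (L ++ [c])
      = FreeGroup.invRev (FreeGroup.invRev (FreeGroup.reduce (L ++ [c]))) := by
        rw [FreeGroup.invRev_invRev]
    _ = FreeGroup.invRev (FreeGroup.reduce (FreeGroup.invRev (L ++ [c]))) := by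
        rw [FreeGroup.reduce_invRev]
    _ = FreeGroup.invRev ((c.1, !c.2) :: FreeGroup.invRev L) := by rw [this, key]
    _ = FreeGroup.invRev (FreeGroup.invRev (L ++ [c])) := by rw [this]
    _ = L ++ [c] := FreeGroup.invRev_invRev

private lemma replicate_of_append_eq_cons {β : Type*} {c : β} :
    ∀ {L : List β}, L ++ [c] = c :: L → L = List.replicate L.length c := by
  intro L
  induction L with
  | nil => intro; rfl
  | cons hd tl ih =>
    intro h
    simp only [List.cons_append, List.cons.injEq] at h
    obtain ⟨h1, h2⟩ := h
    subst h1
    rw [List.length_cons, List.replicate_succ, ← ih h2]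

private lemma key_lemma (i : α) : ∀ n (x : FreeGroup α), x.toWord.length ≤ n →
    x * FreeGroup.of i = FreeGroup.of i * x → ∃ k : ℤ, x = FreeGroup.of i ^ k := by
  intro n
  induction n with
  | zero =>
    intro x hx _
    refine ⟨0, ?_⟩
    rw [zpow_zero]
    rw [← FreeGroup.toWord_eq_nil_iff, List.length_eq_zero_iff.mp (Nat.le_zero.mp hx)]
  | succ n ih =>
    intro x hx hcomm
    by_cases h1 : ∃ w', x.toWord = w' ++ [(i, false)]
    · obtain ⟨w', hw⟩ := h1
      have hymk : x * FreeGroup.of i = FreeGroup.mk w' := by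
        conv_lhs => rw [← FreeGroup.mk_toWord (x := x)]
        rw [hw, show FreeGroup.of i = FreeGroup.mk [(i, true)] from rfl, FreeGroup.mul_mk]
        have hstep : FreeGroup.Red.Step (w' ++ (i, false) :: (i, !false) :: ([] : List (α × Bool)))
            (w' ++ []) := FreeGroup.Red.Step.not
        have : FreeGroup.mk (w' ++ (i, false) :: (i, !false) :: ([] : List (α × Bool)))
            = FreeGroup.mk (w' ++ []) := Quot.sound hstep
        simpa using this
      have hylen : (x * FreeGroup.of i).toWord.length ≤ n := by
        rw [hymk, FreeGroup.toWord_mk]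
        have ha : (FreeGroup.reduce w').length ≤ w'.length :=
          FreeGroup.Red.length_le (FreeGroup.reduce.red)
        have hb : w'.length + 1 = x.toWord.length := by rw [hw]; simp
        omega
      have hycomm : (x * FreeGroup.of i) * FreeGroup.of i
          = FreeGroup.of i * (x * FreeGroup.of i) := by
        rw [← mul_assoc, hcomm]
      obtain ⟨k, hk⟩ := ih _ hylen hycomm
      refine ⟨k - 1, ?_⟩
      have hxy : x = (x * FreeGroup.of i) * (FreeGroup.of i)⁻¹ :=
        (mul_inv_cancel_right _ _).symm
      rw [hxy, hk, ← zpow_sub_one]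
    · by_cases h2 : ∃ w', x.toWord = (i, false) :: w'
      · obtain ⟨w', hw⟩ := h2
        have hymk : FreeGroup.of i * x = FreeGroup.mk w' := by
          conv_lhs => rw [← FreeGroup.mk_toWord (x := x)]
          rw [hw, show FreeGroup.of i = FreeGroup.mk [(i, true)] from rfl, FreeGroup.mul_mk]
          have hstep : FreeGroup.Red.Step
              (([] : List (α × Bool)) ++ (i, true) :: (i, !true) :: w')
              ([] ++ w') := FreeGroup.Red.Step.not
          have : FreeGroup.mk (([] : List (α × Bool)) ++ (i, true) :: (i, !true) :: w')
              = FreeGroup.mk ([] ++ w') := Quot.sound hstep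
          simpa using this
        have hylen : (FreeGroup.of i * x).toWord.length ≤ n := by
          rw [hymk, FreeGroup.toWord_mk]
          have ha : (FreeGroup.reduce w').length ≤ w'.length :=
            FreeGroup.Red.length_le (FreeGroup.reduce.red)
          have hb : w'.length + 1 = x.toWord.length := by rw [hw]; simp
          omega
        have hycomm : (FreeGroup.of i * x) * FreeGroup.of i
            = FreeGroup.of i * (FreeGroup.of i * x) := by
          rw [mul_assoc, hcomm]
        obtain ⟨k, hk⟩ := ih _ hylen hycomm
        refine ⟨k - 1, ?_⟩
        have hxy : x = (FreeGroup.of i)⁻¹ * (FreeGroup.of i * x) :=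
          (inv_mul_cancel_left _ _).symm
        rw [hxy, hk, sub_eq_neg_add, zpow_add, zpow_neg_one]
      · have hred : FreeGroup.reduce x.toWord = x.toWord := FreeGroup.reduce_toWord x
        have hApp : FreeGroup.reduce (x.toWord ++ [(i, true)]) = x.toWord ++ [(i, true)] := by
          apply append_reduced hred
          intro t ht
          exact h1 ⟨t, by simpa using ht⟩
        have hCons : FreeGroup.reduce ((i, true) :: x.toWord) = (i, true) :: x.toWord := by
          apply cons_reduced hred
          intro tl htl
          exact h2 ⟨tl, by simpa using htl⟩
        have hxa : (x * FreeGroup.of i).toWord = x.toWord ++ [(i, true)] := by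
          conv_lhs => rw [← FreeGroup.mk_toWord (x := x)]
          rw [show FreeGroup.of i = FreeGroup.mk [(i, true)] from rfl, FreeGroup.mul_mk,
            FreeGroup.toWord_mk]
          exact hApp
        have hax : (FreeGroup.of i * x).toWord = (i, true) :: x.toWord := by
          conv_lhs => rw [← FreeGroup.mk_toWord (x := x)]
          rw [show FreeGroup.of i = FreeGroup.mk [(i, true)] from rfl, FreeGroup.mul_mk,
            FreeGroup.toWord_mk]
          exact hCons
        have heq : x.toWord ++ [(i, true)] = (i, true) :: x.toWord := by
          rw [← hxa, ← hax, hcomm]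
        have hrep : x.toWord = List.replicate x.toWord.length (i, true) :=
          replicate_of_append_eq_cons heq
        refine ⟨(x.toWord.length : ℤ), ?_⟩
        rw [zpow_natCast]
        apply FreeGroup.toWord_injective
        rw [FreeGroup.toWord_of_pow]
        exact hrep

end Aux

theorem stmt_1 {α : Type*} (i : α) :
    Subgroup.centralizer {FreeGroup.of i} = Subgroup.zpowers (FreeGroup.of i) ∧
    ∀ x : FreeGroup α,
      x * FreeGroup.of i = FreeGroup.of i * x ↔ ∃ k : ℤ, x = (FreeGroup.of i) ^ k := by
  classical
  have main : ∀ x : FreeGroup α,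
      x * FreeGroup.of i = FreeGroup.of i * x ↔ ∃ k : ℤ, x = (FreeGroup.of i) ^ k := by
    intro x
    constructor
    · intro h
      exact key_lemma i x.toWord.length x le_rfl h
    · rintro ⟨k, rfl⟩
      exact ((Commute.zpow_self (FreeGroup.of i) k)).eq
  refine ⟨?_, main⟩
  ext x
  rw [Subgroup.mem_centralizer_iff, Subgroup.mem_zpowers_iff]
  simp only [Set.mem_singleton_iff, forall_eq]
  rw [show (FreeGroup.of i * x = x * FreeGroup.of i) ↔
    (x * FreeGroup.of i = FreeGroup.of i * x) from eq_comm, main x]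
  constructor
  · rintro ⟨k, rfl⟩; exact ⟨k, rfl⟩
  · rintro ⟨k, hk⟩; exact ⟨k, hk.symm⟩
end

section
/- In a free group, if an element x commutes with a nontrivial element w (i.e. x*w = w*x with w ≠ 1), and y also commutes with w, then x and y commute with each other. Equivalently, the centralizer of any nontrivial element of a free group is abelian (in fact infinite cyclic). -/
open FreeGroup

private lemma rot_aux {β : Type*} : ∀ (M : List β) (u y : β), M ++ [u] = y :: M →
    M = List.replicate M.length y ∧ u = y := by
  intro M
  induction M with
  | nil => intro u y h; simpa using h
  | cons m M ih =>
    intro u y h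
    simp only [List.cons_append, List.cons.injEq] at h
    obtain ⟨h1, h2⟩ := h
    obtain ⟨h3, h4⟩ := ih u m h2
    subst h1
    refine ⟨?_, h4⟩
    simp [List.replicate_succ, ← h3]

private lemma red_cons {β : Type*} [DecidableEq β] {L t : List (β × Bool)} {y : β × Bool}
    (h : reduce L = y :: t) (x : β × Bool) :
    reduce (x :: L) = if x.1 = y.1 ∧ x.2 = !y.2 then t else x :: y :: t := by
  rw [reduce.cons, h]

private lemma red_concat {β : Type*} [DecidableEq β] {M : List (β × Bool)} {u : β × Bool}
    (h : reduce (M ++ [u]) = M ++ [u]) (x : β × Bool) :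
    reduce (M ++ [u] ++ [x]) =
      if u.1 = x.1 ∧ u.2 = !x.2 then M else M ++ [u] ++ [x] := by
  have h1 : reduce (invRev (M ++ [u])) = (u.1, !u.2) :: invRev M := by
    rw [reduce_invRev, h]; simp [invRev]
  have h2 : invRev (M ++ [u] ++ [x]) = (x.1, !x.2) :: invRev (M ++ [u]) := by
    simp [invRev]
  have h4 : reduce (M ++ [u] ++ [x]) = invRev (reduce (invRev (M ++ [u] ++ [x]))) := by
    rw [reduce_invRev, invRev_invRev]
  rw [h4, h2, red_cons h1]
  obtain ⟨x1, x2⟩ := x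
  obtain ⟨u1, u2⟩ := u
  by_cases he : u1 = x1
  · subst he; cases x2 <;> cases u2 <;> simp_all [invRev, List.map_reverse, Function.comp_def]
  · have he' : ¬ x1 = u1 := fun hh => he hh.symm
    cases x2 <;> cases u2 <;> simp_all [invRev, List.map_reverse, Function.comp_def, he']

private lemma mk_replicate_true {β : Type*} [DecidableEq β] (a : β) (k : ℕ) :
    FreeGroup.mk (List.replicate k (a, true)) = (FreeGroup.of a) ^ k := by
  apply toWord_injective
  rw [toWord_of_pow, toWord_mk, reduce_replicate]

private lemma mk_replicate_false {β : Type*} [DecidableEq β] (a : β) (k : ℕ) :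
    FreeGroup.mk (List.replicate k (a, false)) = ((FreeGroup.of a) ^ k)⁻¹ := by
  apply toWord_injective
  rw [toWord_inv, toWord_of_pow, toWord_mk, reduce_replicate]
  simp [invRev]

private lemma comm_of_gen {β : Type*} [DecidableEq β] (a : β) (z : FreeGroup β)
    (h : z * FreeGroup.of a = FreeGroup.of a * z) :
    ∃ n : ℤ, z = (FreeGroup.of a) ^ n := by
  have hz : z = FreeGroup.mk z.toWord := (mk_toWord).symm
  have hred : reduce z.toWord = z.toWord := reduce_toWord z
  have heq : reduce (z.toWord ++ [(a, true)]) = reduce ((a, true) :: z.toWord) := by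
    apply reduce.sound
    rw [← mul_mk]
    rw [show ((a, true) :: z.toWord) = [(a, true)] ++ z.toWord from rfl, ← mul_mk]
    rw [mk_toWord]
    exact h
  rcases hL : z.toWord with _ | ⟨y, t⟩
  · exact ⟨0, by rw [hz, hL, zpow_zero, FreeGroup.one_eq_mk]⟩
  obtain ⟨M, u, hMu⟩ := (y :: t).eq_nil_or_concat.resolve_left (by simp)
  rw [List.concat_eq_append] at hMu
  rw [hL] at hred heq
  obtain ⟨u1, u2⟩ := u
  have hred2 : reduce (M ++ [(u1, u2)]) = M ++ [(u1, u2)] := by rw [← hMu]; exact hred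
  have heq2 : reduce (M ++ [(u1, u2)] ++ [(a, true)]) = reduce ((a, true) :: y :: t) := by
    rw [← hMu]; exact heq
  rw [red_concat hred2 (a, true), red_cons hred (a, true)] at heq2
  obtain ⟨y1, y2⟩ := y
  split_ifs at heq2 with c1 c2 c3
  · -- u = (a, false), y = (a, false)
    have hy1 : y1 = a := by simpa using c2.1.symm
    have hy2 : y2 = false := by
      have h5 : true = !y2 := c2.2
      cases y2
      · rfl
      · exact absurd h5 (by decide)
    have hyu : (y1, y2) = ((a : β), false) := by rw [hy1, hy2]
    subst heq2
    obtain ⟨h3, _⟩ := rot_aux M (u1, u2) (y1, y2) hMu.symm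
    rw [hyu] at hL h3
    refine ⟨-((M.length + 1 : ℕ) : ℤ), ?_⟩
    rw [hz, hL,
      show ((a, false) :: M) = List.replicate (M.length + 1) (a, false) from by
        rw [List.replicate_succ, ← h3],
      mk_replicate_false, zpow_neg, zpow_natCast]
  · exfalso
    have e1 := congrArg List.length hMu
    have e2 := congrArg List.length heq2
    simp at e1 e2
    omega
  · exfalso
    have e1 := congrArg List.length hMu
    have e2 := congrArg List.length heq2
    simp at e1 e2
    omega
  · rw [hMu] at heq2
    obtain ⟨h3, _⟩ := rot_aux (M ++ [(u1, u2)]) (a, true) (a, true) heq2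
    refine ⟨(((M ++ [(u1, u2)]).length : ℕ) : ℤ), ?_⟩
    rw [hz, hL, hMu, zpow_natCast]
    rw [h3, mk_replicate_true, List.length_replicate]

private lemma center_eq {β : Type*} (z : FreeGroup β) (hz1 : z ≠ 1)
    (hzc : ∀ g : FreeGroup β, z * g = g * z) (a b : β) : a = b := by
  classical
  by_contra hab
  obtain ⟨m, hm⟩ := comm_of_gen a z (hzc _)
  obtain ⟨k, hk⟩ := comm_of_gen b z (hzc _)
  set φ : FreeGroup β →* Multiplicative ℤ :=
    FreeGroup.lift (fun c => if c = b then Multiplicative.ofAdd 1 else 1) with hφ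
  have h1 : φ z = 1 := by
    rw [hm, map_zpow, FreeGroup.lift_apply_of, if_neg hab, one_zpow]
  have h2 : φ z = Multiplicative.ofAdd k := by
    rw [hk, map_zpow, FreeGroup.lift_apply_of, if_pos rfl, ← ofAdd_zsmul, smul_eq_mul, mul_one]
  have hk0 : k = 0 := by
    have h3 := h1.symm.trans h2
    have := congrArg Multiplicative.toAdd h3
    simpa using this.symm
  exact hz1 (by rw [hk, hk0, zpow_zero])

private lemma subsingleton_comm {β : Type*} (hs : ∀ a b : β, a = b)
    (x y : FreeGroup β) : x * y = y * x := by
  by_cases hβ : Nonempty β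
  · obtain ⟨a⟩ := hβ
    have key : ∀ g : FreeGroup β, g ∈ Subgroup.zpowers (FreeGroup.of a) := by
      intro g
      induction g using FreeGroup.induction_on with
      | C1 => exact one_mem _
      | of c => exact (hs c a) ▸ Subgroup.mem_zpowers _
      | inv_of c hc => exact inv_mem hc
      | mul g h hg hh => exact mul_mem hg hh
    obtain ⟨m, hm⟩ := key x
    obtain ⟨k, hk⟩ := key y
    rw [← hm, ← hk, ← zpow_add, ← zpow_add, add_comm]
  · have key : ∀ g : FreeGroup β, g = 1 := by
      intro g
      induction g using FreeGroup.induction_on with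
      | C1 => rfl
      | of c => exact absurd ⟨c⟩ hβ
      | inv_of c hc => rw [hc]; exact inv_one
      | mul g h hg hh => rw [hg, hh, one_mul]
    rw [key x, key y]

theorem stmt_3 {α : Type*} (w x y : FreeGroup α) (hw : w ≠ 1)
    (hx : x * w = w * x) (hy : y * w = w * y) :
    x * y = y * x := by
  set C := Subgroup.centralizer ({w} : Set (FreeGroup α)) with hC
  have hmem : ∀ g : FreeGroup α, g * w = w * g → g ∈ C := by
    intro g hg
    rw [hC, Subgroup.mem_centralizer_iff]
    intro h hh
    rw [Set.mem_singleton_iff] at hh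
    rw [hh, hg]
  have hxC : x ∈ C := hmem x hx
  have hyC : y ∈ C := hmem y hy
  have hwC : w ∈ C := hmem w rfl
  let e : C ≃* FreeGroup (IsFreeGroup.Generators C) := IsFreeGroup.toFreeGroup C
  set w' := e ⟨w, hwC⟩ with hw'
  have hw'1 : w' ≠ 1 := by
    intro hcon
    apply hw
    have := e.injective (hcon.trans (_root_.map_one e).symm)
    exact congrArg Subtype.val this
  have hw'c : ∀ g' : FreeGroup (IsFreeGroup.Generators C), w' * g' = g' * w' := by
    intro g'
    obtain ⟨g, rfl⟩ := e.surjective g'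
    rw [← _root_.map_mul, ← _root_.map_mul]
    congr 1
    ext
    simpa using g.2 w (Set.mem_singleton w)
  have hsing := center_eq w' hw'1 hw'c
  have hcomm := subsingleton_comm hsing (e ⟨x, hxC⟩) (e ⟨y, hyC⟩)
  rw [← _root_.map_mul, ← _root_.map_mul] at hcomm
  have := e.injective hcomm
  exact congrArg Subtype.val this
end

section
/- Let φ = (1+√5)/2 be the golden ratio and set λ = φ + √φ. Then λ is a root of x⁴ − 2x³ − 2x² − 2x + 1, λ is a real number satisfying 2.89 < λ < 2.8901, and λ is the largest real root of this polynomial. -/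
theorem stmt_11 (φ lam : ℝ) (hφ : φ = (1 + Real.sqrt 5) / 2)
    (hlam : lam = φ + Real.sqrt φ) :
    lam ^ 4 - 2 * lam ^ 3 - 2 * lam ^ 2 - 2 * lam + 1 = 0 ∧
    2.89 < lam ∧ lam < 2.8901 ∧
    ∀ x : ℝ, x ^ 4 - 2 * x ^ 3 - 2 * x ^ 2 - 2 * x + 1 = 0 → x ≤ lam := by
  have hs5 : Real.sqrt 5 ^ 2 = 5 := Real.sq_sqrt (by norm_num)
  have hs5lb : (2.2360679 : ℝ) < Real.sqrt 5 := by
    rw [show (2.2360679:ℝ) = Real.sqrt (2.2360679^2) by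
      rw [Real.sqrt_sq (by norm_num)]]
    exact Real.sqrt_lt_sqrt (by positivity) (by norm_num)
  have hs5ub : Real.sqrt 5 < 2.2360680 := by
    rw [show (2.2360680:ℝ) = Real.sqrt (2.2360680^2) by
      rw [Real.sqrt_sq (by norm_num)]]
    exact Real.sqrt_lt_sqrt (by norm_num) (by norm_num)
  have hφ2 : φ ^ 2 - φ - 1 = 0 := by rw [hφ]; nlinarith [hs5]
  have hφpos : 0 < φ := by rw [hφ]; nlinarith
  have ht2 : Real.sqrt φ ^ 2 = φ := Real.sq_sqrt hφpos.le
  have htnn : 0 ≤ Real.sqrt φ := Real.sqrt_nonneg φ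
  have hφlb : (1.6180339 : ℝ) < φ := by rw [hφ]; nlinarith
  have hφub : φ < 1.6180340 := by rw [hφ]; nlinarith
  have htlb : (1.272 : ℝ) < Real.sqrt φ := by nlinarith
  have htub : Real.sqrt φ < 1.27202 := by nlinarith
  have h1 : lam ^ 2 - 2 * φ * lam + 1 = 0 := by rw [hlam]; nlinarith [ht2, hφ2]
  refine ⟨?_, ?_, ?_, ?_⟩
  · linear_combination (lam ^ 2 - (2 - 2 * φ) * lam + 1) * h1 + 4 * lam ^ 2 * hφ2
  · rw [hlam]; linarith
  · rw [hlam]; linarith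
  · intro x hx
    have hfac : (x ^ 2 - 2 * φ * x + 1) * (x ^ 2 - (2 - 2 * φ) * x + 1) = 0 := by
      linear_combination hx - 4 * x ^ 2 * hφ2
    have hpos : 0 < x ^ 2 - (2 - 2 * φ) * x + 1 := by nlinarith [sq_nonneg (x - (1 - φ)), hφ2]
    have h2 : x ^ 2 - 2 * φ * x + 1 = 0 := by
      rcases mul_eq_zero.mp hfac with h | h
      · exact h
      · linarith
    have hsq : (x - φ) ^ 2 = φ := by linear_combination h2 + hφ2
    by_contra hc
    push_neg at hc
    rw [hlam] at hc
    have h3 : Real.sqrt φ < x - φ := by linarith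
    have h4 := pow_lt_pow_left₀ h3 htnn (two_ne_zero)
    rw [ht2, hsq] at h4
    exact lt_irrefl _ h4
end
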